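/- Let y : ℝ → ℝ be differentiable with y(0) ≥ 0 and y'(t) ≥ -α(y(t)) for all t ≥ 0, where α : ℝ → ℝ is continuous, strictly increasing, and α(0) = 0. Then y(t) ≥ 0 for all t ≥ 0. -/
import Mathlib


theorem stmt_1 (y : ℝ → ℝ) (hy : Differentiable ℝ y) (h0 : y 0 ≥ 0)
    (α : ℝ → ℝ) (hαc : Continuous α) (hαm : StrictMono α) (hα0 : α 0 = 0)
    (hineq : ∀ t ≥ (0:ℝ), deriv y t ≥ -α (y t)) :
    ∀ t ≥ (0:ℝ), y t ≥ 0 := by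
  by_contra h
  push_neg at h
  obtain ⟨T, hT0, hyT⟩ := h
  set S : Set ℝ := {t | t ∈ Set.Icc (0:ℝ) T ∧ y t ≥ 0} with hS
  have hTne : (0:ℝ) ∈ S := ⟨⟨le_refl 0, hT0⟩, h0⟩
  have hSne : S.Nonempty := ⟨0, hTne⟩
  have hSbdd : BddAbove S := ⟨T, fun t ht => ht.1.2⟩
  have hSclosed : IsClosed S := by
    have : S = Set.Icc (0:ℝ) T ∩ y ⁻¹' Set.Ici 0 := by
      ext t; simp [hS, Set.mem_Icc, ge_iff_le, and_assoc]
    rw [this]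
    exact isClosed_Icc.inter (isClosed_Ici.preimage hy.continuous)
  set s := sSup S with hs
  have hsS : s ∈ S := hSclosed.csSup_mem hSne hSbdd
  have hs0 : 0 ≤ s := hsS.1.1
  have hsT : s ≤ T := hsS.1.2
  have hys : 0 ≤ y s := hsS.2
  have hneg : ∀ t, s < t → t ≤ T → y t < 0 := by
    intro t hst htT
    by_contra hpos
    push_neg at hpos
    have : t ∈ S := ⟨⟨hs0.trans hst.le, htT⟩, hpos⟩
    exact absurd (le_csSup hSbdd this) (not_le.mpr hst)
  have hmono : MonotoneOn y (Set.Icc s T) := by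
    apply monotoneOn_of_deriv_nonneg (convex_Icc s T) hy.continuous.continuousOn
      (fun x _ => (hy x).differentiableWithinAt)
    intro x hx
    rw [interior_Icc] at hx
    have hx0 : (0:ℝ) ≤ x := hs0.trans hx.1.le
    have hyx : y x < 0 := hneg x hx.1 hx.2.le
    have : α (y x) < 0 := by
      have := hαm hyx
      rwa [hα0] at this
    have := hineq x hx0
    linarith
  have hsltT : s < T := lt_of_le_of_ne hsT (by intro he; rw [he] at hys; linarith)
  have := hmono (Set.left_mem_Icc.mpr hsT) (Set.right_mem_Icc.mpr hsT) hsT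
  linarith
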